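/- For ε > 0 define M_ε f(x) = sup |f| * (χ_E)_a (x), where the supremum is over all measurable subsets E of the ball B = {|x| ≤ 33/16} with |E| ≤ ε and all a > 0, and (χ_E)_a(x) = a^{-n} χ_E(x/a). Then there exists a constant C depending only on n such that ‖M_ε f‖_{L²(ℝⁿ)} ≤ C ε^{1/2} ‖f‖_{L²(ℝⁿ)} for all f ∈ L²(ℝⁿ). -/

import Mathlib

open MeasureTheory Set ENNReal

/-- The maximal operator `M_ε f(x) = sup_{E ⊆ B_{33/16}, |E| ≤ ε, a > 0} |f| * (χ_E)_a (x)`,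
where `(χ_E)_a(y) = a^{-n} χ_E(y/a)`, formulated with values in `ℝ≥0∞`. -/
noncomputable def Meps {n : ℕ} (ε : ℝ) (f : EuclideanSpace ℝ (Fin n) → ℝ)
    (x : EuclideanSpace ℝ (Fin n)) : ℝ≥0∞ :=
  ⨆ (E : Set (EuclideanSpace ℝ (Fin n))) (_ : MeasurableSet E)
    (_ : E ⊆ Metric.closedBall (0 : EuclideanSpace ℝ (Fin n)) (33 / 16))
    (_ : volume E ≤ ENNReal.ofReal ε) (a : {a : ℝ // 0 < a}),
      ENNReal.ofReal ((a.1 ^ n)⁻¹) *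
        ∫⁻ y in {y : EuclideanSpace ℝ (Fin n) | a.1⁻¹ • y ∈ E},
          ENNReal.ofReal |f (x - y)|

section Aux

variable {n : ℕ}


lemma vol_pre (a : ℝ) (ha : a ≠ 0) (E : Set (EuclideanSpace ℝ (Fin n))) :
    volume {y : EuclideanSpace ℝ (Fin n) | a⁻¹ • y ∈ E} = ENNReal.ofReal (|a| ^ n) * volume E := by
  have : {y : EuclideanSpace ℝ (Fin n) | a⁻¹ • y ∈ E} = (a⁻¹ • ·) ⁻¹' E := rfl
  rw [this, Measure.addHaar_preimage_smul volume (inv_ne_zero ha), finrank_euclideanSpace_fin]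
  congr 1
  rw [inv_pow, inv_inv, abs_pow]

lemma lint_sub_left (x : EuclideanSpace ℝ (Fin n)) (r : ℝ) (g : EuclideanSpace ℝ (Fin n) → ℝ≥0∞) :
    ∫⁻ y in Metric.closedBall (0 : EuclideanSpace ℝ (Fin n)) r, g (x - y) = ∫⁻ z in Metric.closedBall x r, g z := by
  have hmp := Measure.measurePreserving_sub_left (volume : Measure (EuclideanSpace ℝ (Fin n))) x
  have hemb : MeasurableEmbedding (fun y : EuclideanSpace ℝ (Fin n) => x - y) :=
    (Homeomorph.subLeft x).measurableEmbedding
  have h2 := hmp.setLIntegral_comp_preimage_emb hemb g (Metric.closedBall x r)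
  have hset : (fun t : EuclideanSpace ℝ (Fin n) => x - t) ⁻¹' Metric.closedBall x r
      = Metric.closedBall 0 r := by
    ext t
    simp [Metric.mem_closedBall, dist_eq_norm]
  rw [hset] at h2
  exact h2

lemma meps_le {ε : ℝ} {f : EuclideanSpace ℝ (Fin n) → ℝ} {x : EuclideanSpace ℝ (Fin n)}
    {Z : ℝ≥0∞}
    (h : ∀ E : Set (EuclideanSpace ℝ (Fin n)), MeasurableSet E →
      E ⊆ Metric.closedBall (0 : EuclideanSpace ℝ (Fin n)) (33 / 16) →
      volume E ≤ ENNReal.ofReal ε → ∀ a : {a : ℝ // 0 < a},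
      ENNReal.ofReal ((a.1 ^ n)⁻¹) *
        ∫⁻ y in {y : EuclideanSpace ℝ (Fin n) | a.1⁻¹ • y ∈ E},
          ENNReal.ofReal |f (x - y)| ≤ Z) :
    Meps ε f x ≤ Z :=
  iSup_le fun E => iSup_le fun hE => iSup_le fun h1 => iSup_le fun h2 => iSup_le fun a =>
    h E hE h1 h2 a

lemma le_meps {ε : ℝ} {f : EuclideanSpace ℝ (Fin n) → ℝ} {x : EuclideanSpace ℝ (Fin n)}
    {E : Set (EuclideanSpace ℝ (Fin n))} (hE : MeasurableSet E)
    (h1 : E ⊆ Metric.closedBall (0 : EuclideanSpace ℝ (Fin n)) (33 / 16))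
    (h2 : volume E ≤ ENNReal.ofReal ε) (a : {a : ℝ // 0 < a}) :
    ENNReal.ofReal ((a.1 ^ n)⁻¹) *
        ∫⁻ y in {y : EuclideanSpace ℝ (Fin n) | a.1⁻¹ • y ∈ E},
          ENNReal.ofReal |f (x - y)| ≤ Meps ε f x :=
  le_iSup_of_le E <| le_iSup_of_le hE <| le_iSup_of_le h1 <| le_iSup_of_le h2 <|
    le_iSup (fun a : {a : ℝ // 0 < a} => ENNReal.ofReal ((a.1 ^ n)⁻¹) *
        ∫⁻ y in {y : EuclideanSpace ℝ (Fin n) | a.1⁻¹ • y ∈ E},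
          ENNReal.ofReal |f (x - y)|) a

/-- the rational centered maximal function -/
noncomputable def Mmax {n : ℕ} (g : EuclideanSpace ℝ (Fin n) → ℝ)
    (x : EuclideanSpace ℝ (Fin n)) : ℝ≥0∞ :=
  ⨆ (q : ℚ) (_ : 0 < q), ENNReal.ofReal (((q : ℝ) ^ n)⁻¹) *
    ∫⁻ z in Metric.closedBall x (q : ℝ), ENNReal.ofReal |g z|

lemma mmax_meas {g : EuclideanSpace ℝ (Fin n) → ℝ} (hg : Measurable g) :
    Measurable (Mmax g) := by
  apply Measurable.iSup; intro q
  apply Measurable.iSup; intro hq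
  apply Measurable.const_mul
  have : (fun x : EuclideanSpace ℝ (Fin n) =>
      ∫⁻ z in Metric.closedBall x (q : ℝ), ENNReal.ofReal |g z|)
      = fun x => ∫⁻ z, (fun p : (EuclideanSpace ℝ (Fin n)) × (EuclideanSpace ℝ (Fin n)) =>
          if dist p.2 p.1 ≤ (q : ℝ) then ENNReal.ofReal |g p.2| else 0) (x, z) := by
    ext x
    rw [← lintegral_indicator measurableSet_closedBall]
    refine lintegral_congr fun z => ?_
    classical
    rw [indicator_apply]
    simp only [Metric.mem_closedBall]
  rw [this]
  exact Measurable.lintegral_prod_right' (f := fun p : (EuclideanSpace ℝ (Fin n)) × (EuclideanSpace ℝ (Fin n)) =>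
          if dist p.2 p.1 ≤ (q : ℝ) then ENNReal.ofReal |g p.2| else 0) <| by
    apply Measurable.ite _ ((hg.comp measurable_snd).abs.ennreal_ofReal) measurable_const
    exact measurableSet_le (measurable_dist.comp (measurable_snd.prodMk measurable_fst))
      measurable_const

lemma meps_split {ε s : ℝ} {f : EuclideanSpace ℝ (Fin n) → ℝ} (hf : Measurable f)
    (x : EuclideanSpace ℝ (Fin n)) :
    Meps ε f x ≤ Meps ε (fun z => if |f z| ≤ s then f z else 0) x
      + Meps ε (fun z => if |f z| ≤ s then 0 else f z) x := by
  set f1 : EuclideanSpace ℝ (Fin n) → ℝ := fun z => if |f z| ≤ s then f z else 0 with hf1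
  set f2 : EuclideanSpace ℝ (Fin n) → ℝ := fun z => if |f z| ≤ s then 0 else f z with hf2
  have hm1 : Measurable f1 :=
    Measurable.ite (measurableSet_le hf.abs measurable_const) hf measurable_const
  apply meps_le
  intro E hE h1 h2 a
  have key : ∀ y, (ENNReal.ofReal |f (x - y)| : ℝ≥0∞)
      = ENNReal.ofReal |f1 (x - y)| + ENNReal.ofReal |f2 (x - y)| := by
    intro y
    by_cases h : |f (x - y)| ≤ s <;> simp [f1, f2, h]
  calc ENNReal.ofReal ((a.1 ^ n)⁻¹) *
        ∫⁻ y in {y : EuclideanSpace ℝ (Fin n) | a.1⁻¹ • y ∈ E}, ENNReal.ofReal |f (x - y)|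
      = ENNReal.ofReal ((a.1 ^ n)⁻¹) *
        ∫⁻ y in {y : EuclideanSpace ℝ (Fin n) | a.1⁻¹ • y ∈ E},
          (ENNReal.ofReal |f1 (x - y)| + ENNReal.ofReal |f2 (x - y)|) := by
        rw [lintegral_congr fun y => key y]
    _ = ENNReal.ofReal ((a.1 ^ n)⁻¹) *
        ((∫⁻ y in {y : EuclideanSpace ℝ (Fin n) | a.1⁻¹ • y ∈ E}, ENNReal.ofReal |f1 (x - y)|)
        + ∫⁻ y in {y : EuclideanSpace ℝ (Fin n) | a.1⁻¹ • y ∈ E}, ENNReal.ofReal |f2 (x - y)|) := by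
        have hmm : Measurable fun y : EuclideanSpace ℝ (Fin n) => ENNReal.ofReal |f1 (x - y)| :=
          ((hm1.comp (measurable_id.const_sub x)).abs).ennreal_ofReal
        rw [lintegral_add_left hmm]
    _ ≤ Meps ε f1 x + Meps ε f2 x := by
        rw [mul_add]
        exact add_le_add (le_meps hE h1 h2 a) (le_meps hE h1 h2 a)

lemma meps_bdd {ε s : ℝ} (hε : 0 ≤ ε) (hs : 0 ≤ s) {g : EuclideanSpace ℝ (Fin n) → ℝ}
    (hb : ∀ z, |g z| ≤ s) (x : EuclideanSpace ℝ (Fin n)) :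
    Meps ε g x ≤ ENNReal.ofReal ε * ENNReal.ofReal s := by
  apply meps_le
  intro E hE h1 h2 a
  have ha : (0:ℝ) < a.1 := a.2
  have hvol : volume {y : EuclideanSpace ℝ (Fin n) | a.1⁻¹ • y ∈ E}
      ≤ ENNReal.ofReal (a.1 ^ n) * ENNReal.ofReal ε := by
    rw [vol_pre a.1 ha.ne' E, abs_of_pos ha]
    exact mul_le_mul_right h2 _
  calc ENNReal.ofReal ((a.1 ^ n)⁻¹) *
        ∫⁻ y in {y : EuclideanSpace ℝ (Fin n) | a.1⁻¹ • y ∈ E}, ENNReal.ofReal |g (x - y)|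
      ≤ ENNReal.ofReal ((a.1 ^ n)⁻¹) *
        ∫⁻ _ in {y : EuclideanSpace ℝ (Fin n) | a.1⁻¹ • y ∈ E}, ENNReal.ofReal s :=
        mul_le_mul_right (lintegral_mono fun y => ENNReal.ofReal_le_ofReal (hb _)) _
    _ = ENNReal.ofReal ((a.1 ^ n)⁻¹) * (ENNReal.ofReal s *
          volume {y : EuclideanSpace ℝ (Fin n) | a.1⁻¹ • y ∈ E}) := by
        rw [setLIntegral_const]
    _ ≤ ENNReal.ofReal ((a.1 ^ n)⁻¹) * (ENNReal.ofReal s *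
          (ENNReal.ofReal (a.1 ^ n) * ENNReal.ofReal ε)) :=
        mul_le_mul_right (mul_le_mul_right hvol _) _
    _ = ENNReal.ofReal ε * ENNReal.ofReal s := by
        rw [← ENNReal.ofReal_mul (by positivity), ← ENNReal.ofReal_mul hs,
          ← ENNReal.ofReal_mul (by positivity), ← ENNReal.ofReal_mul hε]
        congr 1
        field_simp

lemma meps_mmax {ε : ℝ} {g : EuclideanSpace ℝ (Fin n) → ℝ} (x : EuclideanSpace ℝ (Fin n)) :
    Meps ε g x ≤ ENNReal.ofReal ((33/8 : ℝ) ^ n) * Mmax g x := by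
  apply meps_le
  intro E hE h1 h2 a
  have ha : (0:ℝ) < a.1 := a.2
  obtain ⟨q, hq1, hq2⟩ := exists_rat_btwn (show (33/16) * a.1 < (33/8) * a.1 by nlinarith)
  have hq0 : (0:ℝ) < (q:ℝ) := lt_trans (by positivity) hq1
  have hsub : {y : EuclideanSpace ℝ (Fin n) | a.1⁻¹ • y ∈ E}
      ⊆ Metric.closedBall (0 : EuclideanSpace ℝ (Fin n)) ((33/16) * a.1) := by
    intro y hy
    have h3 := h1 hy
    rw [Metric.mem_closedBall, dist_zero_right] at h3 ⊢
    rw [norm_smul, norm_inv, Real.norm_eq_abs, abs_of_pos ha] at h3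
    calc ‖y‖ = a.1 * (a.1⁻¹ * ‖y‖) := by field_simp
      _ ≤ a.1 * (33/16) := by
          apply mul_le_mul_of_nonneg_left h3 ha.le
      _ = (33/16) * a.1 := by ring
  have hpow : ((a.1 : ℝ) ^ n)⁻¹ ≤ (33/8) ^ n * (((q:ℝ)) ^ n)⁻¹ := by
    have h5 : ((((33:ℝ)/8) * a.1) ^ n)⁻¹ ≤ (((q:ℝ)) ^ n)⁻¹ := by
      apply inv_anti₀ (by positivity) (pow_le_pow_left₀ hq0.le hq2.le n)
    calc ((a.1 : ℝ) ^ n)⁻¹ = (33/8) ^ n * ((((33:ℝ)/8) * a.1) ^ n)⁻¹ := by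
          rw [mul_pow]; field_simp
      _ ≤ (33/8) ^ n * (((q:ℝ)) ^ n)⁻¹ :=
          mul_le_mul_of_nonneg_left h5 (by positivity)
  calc ENNReal.ofReal ((a.1 ^ n)⁻¹) *
        ∫⁻ y in {y : EuclideanSpace ℝ (Fin n) | a.1⁻¹ • y ∈ E}, ENNReal.ofReal |g (x - y)|
      ≤ ENNReal.ofReal ((a.1 ^ n)⁻¹) *
        ∫⁻ y in Metric.closedBall (0 : EuclideanSpace ℝ (Fin n)) ((33/16) * a.1),
          ENNReal.ofReal |g (x - y)| := mul_le_mul_right (lintegral_mono_set hsub) _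
    _ = ENNReal.ofReal ((a.1 ^ n)⁻¹) *
        ∫⁻ z in Metric.closedBall x ((33/16) * a.1), ENNReal.ofReal |g z| := by
        rw [lint_sub_left x ((33/16) * a.1) (fun z => ENNReal.ofReal |g z|)]
    _ ≤ ENNReal.ofReal ((a.1 ^ n)⁻¹) *
        ∫⁻ z in Metric.closedBall x (q : ℝ), ENNReal.ofReal |g z| :=
        mul_le_mul_right (lintegral_mono_set (Metric.closedBall_subset_closedBall hq1.le)) _
    _ ≤ (ENNReal.ofReal ((33/8 : ℝ) ^ n) * ENNReal.ofReal ((((q:ℝ)) ^ n)⁻¹)) *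
        ∫⁻ z in Metric.closedBall x (q : ℝ), ENNReal.ofReal |g z| := by
        apply mul_le_mul_left
        rw [← ENNReal.ofReal_mul (by positivity)]
        exact ENNReal.ofReal_le_ofReal hpow
    _ ≤ ENNReal.ofReal ((33/8 : ℝ) ^ n) * Mmax g x := by
        rw [mul_assoc]
        apply mul_le_mul_right
        exact le_iSup_of_le q (le_iSup_of_le (by exact_mod_cast hq0) le_rfl)

lemma weaktype (hn : n ≠ 0) {g : EuclideanSpace ℝ (Fin n) → ℝ} (hg : Measurable g)
    {t : ℝ} (ht : 0 < t) (hI : (∫⁻ z, ENNReal.ofReal |g z|) ≠ ∞) :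
    volume {x : EuclideanSpace ℝ (Fin n) | ENNReal.ofReal t < Mmax g x}
      ≤ ENNReal.ofReal (4 ^ n) * volume (Metric.ball (0 : EuclideanSpace ℝ (Fin n)) 1) *
        (ENNReal.ofReal t)⁻¹ * ∫⁻ z, ENNReal.ofReal |g z| := by
  set G : EuclideanSpace ℝ (Fin n) → ℝ≥0∞ := fun z => ENNReal.ofReal |g z| with hG
  set I : ℝ≥0∞ := ∫⁻ z, G z with hIdef
  set s : Set (EuclideanSpace ℝ (Fin n)) := {x | ENNReal.ofReal t < Mmax g x} with hs
  have htne : ENNReal.ofReal t ≠ 0 := by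
    simp [ENNReal.ofReal_eq_zero, not_le, ht]
  -- choice of radii
  have H : ∀ x : EuclideanSpace ℝ (Fin n), ∃ q : ℚ, x ∈ s → (0 < (q:ℝ) ∧
      ENNReal.ofReal (t * (q:ℝ)^n) < ∫⁻ z in Metric.closedBall x (q:ℝ), G z) := by
    intro x
    by_cases hx : x ∈ s
    · rw [hs, mem_setOf_eq, Mmax, lt_iSup_iff] at hx
      obtain ⟨q, hq⟩ := hx
      rw [lt_iSup_iff] at hq
      obtain ⟨hq0', hq⟩ := hq
      have hq0 : (0:ℝ) < (q:ℝ) := by exact_mod_cast hq0'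
      refine ⟨q, fun _ => ⟨hq0, ?_⟩⟩
      have hb0 : (ENNReal.ofReal ((q:ℝ)^n)) ≠ 0 := by
        simp [ENNReal.ofReal_eq_zero, not_le]; positivity
      have hbtop : (ENNReal.ofReal ((q:ℝ)^n)) ≠ ∞ := ENNReal.ofReal_ne_top
      rw [ENNReal.ofReal_inv_of_pos (by positivity)] at hq
      have h3 : ENNReal.ofReal ((q:ℝ)^n) * ENNReal.ofReal t
          < ENNReal.ofReal ((q:ℝ)^n) * ((ENNReal.ofReal ((q:ℝ)^n))⁻¹ *
            ∫⁻ z in Metric.closedBall x (q:ℝ), G z) :=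
        (ENNReal.mul_lt_mul_iff_right hb0 hbtop).2 hq
      rw [← mul_assoc, ENNReal.mul_inv_cancel hb0 hbtop, one_mul] at h3
      rw [ENNReal.ofReal_mul ht.le]
      rw [mul_comm] at h3
      exact h3
    · exact ⟨1, fun h => absurd h hx⟩
  choose r hr using H
  -- bounded radii
  have hRbd : ∀ x ∈ s, ((r x : ℝ)) ≤ max 1 (I.toReal / t) := by
    intro x hx
    obtain ⟨hq0, hq⟩ := hr x hx
    have hJI : (∫⁻ z in Metric.closedBall x ((r x : ℝ)), G z) ≤ I :=
      setLIntegral_le_lintegral _ _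
    have h4 : ENNReal.ofReal (t * (r x : ℝ)^n) < I := lt_of_lt_of_le hq hJI
    have h5 : t * (r x : ℝ)^n ≤ I.toReal := by
      by_contra hcon
      push_neg at hcon
      have := ENNReal.ofReal_le_ofReal hcon.le
      rw [ENNReal.ofReal_toReal hI] at this
      exact absurd (lt_of_le_of_lt this h4) (lt_irrefl _)
    have h6 : (r x : ℝ)^n ≤ I.toReal / t := by
      rw [le_div_iff₀ ht]
      nlinarith
    rcases le_or_gt ((r x : ℝ)) 1 with h | h
    · exact le_max_of_le_left h
    · refine le_max_of_le_right (le_trans ?_ h6)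
      exact le_self_pow₀ h.le hn
  obtain ⟨u, hus, hdisj, hcov⟩ :=
    Vitali.exists_disjoint_subfamily_covering_enlargement_closedBall s id
      (fun x => (r x : ℝ)) (max 1 (I.toReal / t)) hRbd 4 (by norm_num)
  simp only [id] at hdisj hcov
  have hcount : u.Countable := by
    apply Set.PairwiseDisjoint.countable_of_nonempty_interior hdisj
    intro b hb
    have hb0 : (0:ℝ) < (r b : ℝ) := (hr b (hus hb)).1
    exact ⟨b, Metric.ball_subset_interior_closedBall (Metric.mem_ball_self hb0)⟩
  haveI := hcount.to_subtype
  have hcov' : s ⊆ ⋃ b ∈ u, Metric.closedBall b (4 * (r b : ℝ)) := by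
    intro x hx
    obtain ⟨b, hbu, hsub⟩ := hcov x hx
    exact mem_biUnion hbu (hsub (Metric.mem_closedBall_self (hr x hx).1.le))
  have hsum : (∑' b : u, ∫⁻ z in Metric.closedBall (b : EuclideanSpace ℝ (Fin n)) ((r (b : EuclideanSpace ℝ (Fin n)) : ℝ)), G z) ≤ I := by
    rw [← lintegral_iUnion (fun b : u => measurableSet_closedBall)
      (hdisj.subtype _ _) G]
    exact setLIntegral_le_lintegral _ _
  have key : ∀ b : u, volume (Metric.closedBall (b : EuclideanSpace ℝ (Fin n))
      (4 * (r (b : EuclideanSpace ℝ (Fin n)) : ℝ)))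
      ≤ (ENNReal.ofReal (4 ^ n) * volume (Metric.ball (0 : EuclideanSpace ℝ (Fin n)) 1) *
          (ENNReal.ofReal t)⁻¹) *
        ∫⁻ z in Metric.closedBall (b : EuclideanSpace ℝ (Fin n))
          ((r (b : EuclideanSpace ℝ (Fin n)) : ℝ)), G z := by
    intro b
    have hbs := hus b.2
    have h0 : (0:ℝ) < (r (b : EuclideanSpace ℝ (Fin n)) : ℝ) := (hr _ hbs).1
    have heq : volume (Metric.closedBall (b : EuclideanSpace ℝ (Fin n))
        (4 * (r (b : EuclideanSpace ℝ (Fin n)) : ℝ)))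
        = ENNReal.ofReal ((4 * (r (b : EuclideanSpace ℝ (Fin n)) : ℝ)) ^ n) *
          volume (Metric.ball (0 : EuclideanSpace ℝ (Fin n)) 1) := by
      rw [Measure.addHaar_closedBall volume _ (by positivity), finrank_euclideanSpace_fin]
    have h2 : ENNReal.ofReal ((4 * (r (b : EuclideanSpace ℝ (Fin n)) : ℝ)) ^ n)
        = ENNReal.ofReal (4 ^ n) * ENNReal.ofReal ((r (b : EuclideanSpace ℝ (Fin n)) : ℝ) ^ n) := by
      rw [mul_pow, ENNReal.ofReal_mul (by positivity)]
    have h3 : ENNReal.ofReal ((r (b : EuclideanSpace ℝ (Fin n)) : ℝ) ^ n)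
        ≤ (ENNReal.ofReal t)⁻¹ * ∫⁻ z in Metric.closedBall (b : EuclideanSpace ℝ (Fin n))
          ((r (b : EuclideanSpace ℝ (Fin n)) : ℝ)), G z := by
      have h4 := (hr _ hbs).2.le
      rw [ENNReal.ofReal_mul ht.le] at h4
      calc ENNReal.ofReal ((r (b : EuclideanSpace ℝ (Fin n)) : ℝ) ^ n)
          = (ENNReal.ofReal t)⁻¹ * (ENNReal.ofReal t *
            ENNReal.ofReal ((r (b : EuclideanSpace ℝ (Fin n)) : ℝ) ^ n)) := by
            rw [← mul_assoc, ENNReal.inv_mul_cancel htne ENNReal.ofReal_ne_top, one_mul]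
        _ ≤ _ := mul_le_mul_right h4 _
    rw [heq, h2]
    calc ENNReal.ofReal (4 ^ n) * ENNReal.ofReal ((r (b : EuclideanSpace ℝ (Fin n)) : ℝ) ^ n) *
          volume (Metric.ball (0 : EuclideanSpace ℝ (Fin n)) 1)
        ≤ ENNReal.ofReal (4 ^ n) * ((ENNReal.ofReal t)⁻¹ *
            ∫⁻ z in Metric.closedBall (b : EuclideanSpace ℝ (Fin n))
              ((r (b : EuclideanSpace ℝ (Fin n)) : ℝ)), G z) *
          volume (Metric.ball (0 : EuclideanSpace ℝ (Fin n)) 1) := by gcongr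
      _ = _ := by ring
  calc volume s ≤ volume (⋃ b ∈ u, Metric.closedBall b (4 * (r b : ℝ))) := measure_mono hcov'
    _ ≤ ∑' b : u, volume (Metric.closedBall (b : EuclideanSpace ℝ (Fin n))
          (4 * (r (b : EuclideanSpace ℝ (Fin n)) : ℝ))) := measure_biUnion_le volume hcount _
    _ ≤ ∑' b : u, (ENNReal.ofReal (4 ^ n) *
          volume (Metric.ball (0 : EuclideanSpace ℝ (Fin n)) 1) * (ENNReal.ofReal t)⁻¹) *
          ∫⁻ z in Metric.closedBall (b : EuclideanSpace ℝ (Fin n))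
            ((r (b : EuclideanSpace ℝ (Fin n)) : ℝ)), G z := ENNReal.tsum_le_tsum key
    _ = (ENNReal.ofReal (4 ^ n) * volume (Metric.ball (0 : EuclideanSpace ℝ (Fin n)) 1) *
          (ENNReal.ofReal t)⁻¹) * ∑' b : u, ∫⁻ z in Metric.closedBall (b : EuclideanSpace ℝ (Fin n))
            ((r (b : EuclideanSpace ℝ (Fin n)) : ℝ)), G z := ENNReal.tsum_mul_left
    _ ≤ _ := mul_le_mul_right hsum _

lemma sq_layer (c : ℝ≥0∞) :
    c ^ (2:ℝ) ≤ ∫⁻ t in Ioi (0:ℝ),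
      (if ENNReal.ofReal t < c then 2 * ENNReal.ofReal t else 0) := by
  by_cases hc : c = ∞
  · subst hc
    have h1 : (∫⁻ t in Ioi (0:ℝ), ((Ioi (1:ℝ)).indicator (fun _ => (2:ℝ≥0∞)) t))
        ≤ ∫⁻ t in Ioi (0:ℝ), (if ENNReal.ofReal t < ∞ then 2 * ENNReal.ofReal t else 0) := by
      apply lintegral_mono
      intro t
      by_cases h : t ∈ Ioi (1:ℝ)
      · rw [indicator_of_mem h]
        simp only [ENNReal.ofReal_lt_top, if_true]
        have : (1:ℝ≥0∞) ≤ ENNReal.ofReal t := by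
          rw [← ENNReal.ofReal_one]
          exact ENNReal.ofReal_le_ofReal (le_of_lt h)
        calc (2:ℝ≥0∞) = 2 * 1 := by ring
          _ ≤ 2 * ENNReal.ofReal t := mul_le_mul_right this _
      · rw [indicator_of_notMem h]
        exact zero_le
    have h2 : (∫⁻ t in Ioi (0:ℝ), ((Ioi (1:ℝ)).indicator (fun _ => (2:ℝ≥0∞)) t)) = ∞ := by
      rw [lintegral_indicator measurableSet_Ioi, setLIntegral_const,
        Measure.restrict_apply measurableSet_Ioi]
      have : Ioi (1:ℝ) ∩ Ioi (0:ℝ) = Ioi 1 := by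
        apply inter_eq_self_of_subset_left
        exact Ioi_subset_Ioi (by norm_num)
      rw [this, Real.volume_Ioi]
      simp
    rw [ENNReal.top_rpow_of_pos (by norm_num)]
    rw [h2] at h1
    exact le_trans le_top h1
  · set r : ℝ := c.toReal with hr
    have hr0 : 0 ≤ r := ENNReal.toReal_nonneg
    have key : ∫⁻ t in Ioo (0:ℝ) r, (2 * ENNReal.ofReal t)
        ≤ ∫⁻ t in Ioi (0:ℝ), (if ENNReal.ofReal t < c then 2 * ENNReal.ofReal t else 0) := by
      have hcong : ∫⁻ t in Ioo (0:ℝ) r, (2 * ENNReal.ofReal t)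
          = ∫⁻ t in Ioo (0:ℝ) r, (if ENNReal.ofReal t < c then 2 * ENNReal.ofReal t else 0) := by
        apply setLIntegral_congr_fun measurableSet_Ioo
        intro t ht
        dsimp only
        rw [if_pos]
        rw [← ENNReal.ofReal_toReal hc]
        exact ENNReal.ofReal_lt_ofReal_iff_of_nonneg ht.1.le |>.2 ht.2
      rw [hcong]
      exact lintegral_mono_set Ioo_subset_Ioi_self
    have hint : IntegrableOn (fun t : ℝ => 2 * t) (Ioo (0:ℝ) r) := by
      have h : IntervalIntegrable (fun t : ℝ => 2 * t) volume 0 r :=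
        Continuous.intervalIntegrable (by continuity) 0 r
      rw [intervalIntegrable_iff_integrableOn_Ioo_of_le hr0] at h
      exact h
    have hval : ∫⁻ t in Ioo (0:ℝ) r, (2 * ENNReal.ofReal t) = ENNReal.ofReal (r ^ 2) := by
      have h3 : ∀ t : ℝ, (2:ℝ≥0∞) * ENNReal.ofReal t = ENNReal.ofReal (2 * t) := by
        intro t
        rw [ENNReal.ofReal_mul (by norm_num), ENNReal.ofReal_ofNat]
      simp_rw [h3]
      rw [← ofReal_integral_eq_lintegral_ofReal hint]
      · congr 1
        rw [← integral_Ioc_eq_integral_Ioo, ← intervalIntegral.integral_of_le hr0]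
        rw [intervalIntegral.integral_const_mul, integral_id]
        ring
      · filter_upwards [self_mem_ae_restrict measurableSet_Ioo] with t ht
        simp only [Pi.zero_apply]
        nlinarith [ht.1]
    have hcr : c ^ (2:ℝ) = ENNReal.ofReal (r ^ 2) := by
      have h7 : r ^ (2:ℝ) = r ^ 2 := by
        rw [show (2:ℝ) = ((2:ℕ):ℝ) by norm_num, Real.rpow_natCast]
      rw [← ENNReal.ofReal_toReal hc, ← hr,
        ENNReal.ofReal_rpow_of_nonneg hr0 (by norm_num), h7]
    rw [hcr, ← hval]
    exact key

end Aux

/-- `‖M_ε f‖_{L²} ≤ C ε^{1/2} ‖f‖_{L²}` with `C = C(n)`. -/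
theorem stmt6 (n : ℕ) :
    ∃ C : ℝ, 0 < C ∧ ∀ (ε : ℝ), 0 < ε →
      ∀ f : EuclideanSpace ℝ (Fin n) → ℝ, Measurable f →
        (∫⁻ x, (Meps ε f x) ^ (2:ℝ)) ^ (1/2 : ℝ)
          ≤ ENNReal.ofReal (C * ε ^ (1/2 : ℝ)) *
            (∫⁻ x, ENNReal.ofReal |f x| ^ (2:ℝ)) ^ (1/2 : ℝ) := by
  rcases eq_or_ne n 0 with rfl | hn
  · -- zero-dimensional case
    refine ⟨1, one_pos, ?_⟩
    intro ε hε f hf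
    haveI : Subsingleton (EuclideanSpace ℝ (Fin 0)) := ⟨fun a b => by ext i; exact i.elim0⟩
    have huniv : volume (univ : Set (EuclideanSpace ℝ (Fin 0))) = 1 := by
      have h := (EuclideanSpace.volume_preserving_symm_measurableEquiv_toLp (Fin 0)).measure_preimage
        MeasurableSet.univ.nullMeasurableSet
      simp only [preimage_univ] at h
      rw [h, show (volume : Measure (Fin 0 → ℝ)) = Measure.pi fun _ => volume from rfl,
        Measure.pi_univ]
      simp
    have hb : ∀ x, Meps ε f x ≤ ENNReal.ofReal (ε ^ (1/2:ℝ)) * ENNReal.ofReal |f x| := by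
      intro x
      apply meps_le
      intro E hE h1 h2 a
      have hS : {y : EuclideanSpace ℝ (Fin 0) | a.1⁻¹ • y ∈ E} = E := by
        ext y
        simp [mem_setOf_eq, Subsingleton.elim (a.1⁻¹ • y) y]
      have hfc : ∀ y : EuclideanSpace ℝ (Fin 0),
          (ENNReal.ofReal |f (x - y)|) = ENNReal.ofReal |f x| := fun y => by
        rw [Subsingleton.elim (x - y) x]
      rw [pow_zero, inv_one, ENNReal.ofReal_one, one_mul, hS, lintegral_congr hfc,
        setLIntegral_const]
      have hEle : volume E ≤ ENNReal.ofReal (ε ^ (1/2:ℝ)) := by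
        rcases le_total ε 1 with h | h
        · refine h2.trans (ENNReal.ofReal_le_ofReal ?_)
          calc ε = ε ^ (1:ℝ) := (Real.rpow_one ε).symm
            _ ≤ ε ^ (1/2:ℝ) := Real.rpow_le_rpow_of_exponent_ge hε h (by norm_num)
        · have h3 : volume E ≤ 1 := le_trans (measure_mono (subset_univ E)) (le_of_eq huniv)
          refine h3.trans ?_
          rw [← ENNReal.ofReal_one]
          apply ENNReal.ofReal_le_ofReal
          calc (1:ℝ) = 1 ^ (1/2:ℝ) := (Real.one_rpow _).symm
            _ ≤ ε ^ (1/2:ℝ) := Real.rpow_le_rpow (by norm_num) h (by norm_num)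
      rw [mul_comm]
      exact mul_le_mul' hEle le_rfl
    have h2 : ∀ x, (Meps ε f x) ^ (2:ℝ)
        ≤ (ENNReal.ofReal (ε ^ (1/2:ℝ))) ^ (2:ℝ) * (ENNReal.ofReal |f x|) ^ (2:ℝ) := by
      intro x
      calc (Meps ε f x) ^ (2:ℝ)
          ≤ (ENNReal.ofReal (ε ^ (1/2:ℝ)) * ENNReal.ofReal |f x|) ^ (2:ℝ) :=
            ENNReal.rpow_le_rpow (hb x) (by norm_num)
        _ = _ := ENNReal.mul_rpow_of_nonneg _ _ (by norm_num)
    calc (∫⁻ x, (Meps ε f x) ^ (2:ℝ)) ^ (1/2:ℝ)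
        ≤ ((ENNReal.ofReal (ε ^ (1/2:ℝ))) ^ (2:ℝ) *
            ∫⁻ x, (ENNReal.ofReal |f x|) ^ (2:ℝ)) ^ (1/2:ℝ) := by
          apply ENNReal.rpow_le_rpow _ (by norm_num)
          rw [← lintegral_const_mul' _ _
            (ENNReal.rpow_ne_top_of_nonneg (by norm_num) ENNReal.ofReal_ne_top)]
          exact lintegral_mono h2
      _ = ENNReal.ofReal (1 * ε ^ (1/2:ℝ)) * (∫⁻ x, (ENNReal.ofReal |f x|) ^ (2:ℝ)) ^ (1/2:ℝ) := by
          rw [ENNReal.mul_rpow_of_nonneg _ _ (by norm_num), one_mul]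
          congr 1
          rw [← ENNReal.rpow_mul]
          norm_num
  · -- positive-dimensional case
    set μB : ℝ≥0∞ := volume (Metric.ball (0 : EuclideanSpace ℝ (Fin n)) 1) with hμB
    have hμBfin : μB ≠ ∞ := measure_ball_lt_top.ne
    set D : ℝ≥0∞ := ENNReal.ofReal (4 ^ n) * μB * ENNReal.ofReal (2 * (33/8:ℝ) ^ n) with hD
    have hDfin : D ≠ ∞ := by
      simp only [hD]
      exact ENNReal.mul_ne_top (ENNReal.mul_ne_top ENNReal.ofReal_ne_top hμBfin)
        ENNReal.ofReal_ne_top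
    set K : ℝ≥0∞ := 8 * D with hK
    have hKfin : K ≠ ∞ := ENNReal.mul_ne_top (by norm_num) hDfin
    refine ⟨max 1 (K.toReal ^ (1/2:ℝ)), lt_of_lt_of_le one_pos (le_max_left _ _), ?_⟩
    intro ε hε f hf
    set C : ℝ := max 1 (K.toReal ^ (1/2:ℝ)) with hC
    set G : EuclideanSpace ℝ (Fin n) → ℝ≥0∞ := fun z => ENNReal.ofReal |f z| with hG
    set I2 : ℝ≥0∞ := ∫⁻ x, G x ^ (2:ℝ) with hI2def
    by_cases hI2 : I2 = ∞
    · rw [hI2]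
      rw [ENNReal.top_rpow_of_pos (by norm_num), ENNReal.mul_top]
      · exact le_top
      · simp only [ne_eq, ENNReal.ofReal_eq_zero, not_le]
        have : (0:ℝ) < ε ^ (1/2:ℝ) := Real.rpow_pos_of_pos hε _
        nlinarith [le_max_left (1:ℝ) (K.toReal ^ (1/2:ℝ))]
    -- truncations
    have hG2 : ∀ z, G z ^ (2:ℝ) = ENNReal.ofReal (|f z| ^ 2) := by
      intro z
      rw [hG, ENNReal.ofReal_rpow_of_nonneg (abs_nonneg _) (by norm_num)]
      congr 1
      rw [show (2:ℝ) = ((2:ℕ):ℝ) by norm_num, Real.rpow_natCast]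
    have hm2 : ∀ k : ℤ, Measurable (fun z => if |f z| ≤ (2:ℝ)^k then 0 else f z) := fun k =>
      Measurable.ite (measurableSet_le hf.abs measurable_const) measurable_const hf
    set Ψ : EuclideanSpace ℝ (Fin n) → ℝ≥0∞ := fun x => ⨅ k : ℤ,
      (ENNReal.ofReal ε * ENNReal.ofReal ((2:ℝ)^k) +
        ENNReal.ofReal ((33/8:ℝ) ^ n) * Mmax (fun z => if |f z| ≤ (2:ℝ)^k then 0 else f z) x)
      with hΨ
    have hΨm : Measurable Ψ := by
      apply Measurable.iInf
      intro k
      exact measurable_const.add ((mmax_meas (hm2 k)).const_mul _)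
    have hMΨ : ∀ x, Meps ε f x ≤ Ψ x := by
      intro x
      refine le_iInf fun k => ?_
      have hsplit := meps_split (ε := ε) (s := (2:ℝ)^k) hf x
      refine hsplit.trans (add_le_add ?_ ?_)
      · have hk0 : (0:ℝ) < (2:ℝ)^k := by positivity
        refine (meps_bdd hε.le hk0.le ?_ x)
        intro z
        by_cases h : |f z| ≤ (2:ℝ)^k <;> simp [h]
        · positivity
      · exact meps_mmax x
    -- distribution bound
    set W : ℝ → ℝ≥0∞ := fun t => ∫⁻ z, (if t < 4 * ε * |f z| then G z else 0) with hW
    have hdist : ∀ t : ℝ, 0 < t →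
        volume {x | ENNReal.ofReal t < Ψ x} ≤ D * (ENNReal.ofReal t)⁻¹ * W t := by
      intro t ht
      obtain ⟨k, hk1, hk2⟩ := exists_mem_Ico_zpow
        (show (0:ℝ) < t / (2 * ε) by positivity) (show (1:ℝ) < 2 by norm_num)
      set g2 : EuclideanSpace ℝ (Fin n) → ℝ := fun z => if |f z| ≤ (2:ℝ)^k then 0 else f z
        with hg2
      set t' : ℝ := t / (2 * (33/8:ℝ) ^ n) with ht'def
      have ht' : 0 < t' := by positivity
      have hcne : (ENNReal.ofReal ((33/8:ℝ)^n)) ≠ 0 := by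
        simp only [ne_eq, ENNReal.ofReal_eq_zero, not_le]; positivity
      have hsub : {x | ENNReal.ofReal t < Ψ x}
          ⊆ {x | ENNReal.ofReal t' < Mmax g2 x} := by
        intro x hx
        have hxk : ENNReal.ofReal t < ENNReal.ofReal ε * ENNReal.ofReal ((2:ℝ)^k) +
            ENNReal.ofReal ((33/8:ℝ) ^ n) * Mmax g2 x :=
          lt_of_lt_of_le hx (iInf_le _ k)
        have hA : ENNReal.ofReal ε * ENNReal.ofReal ((2:ℝ)^k) ≤ ENNReal.ofReal (t/2) := by
          rw [← ENNReal.ofReal_mul hε.le]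
          apply ENNReal.ofReal_le_ofReal
          calc ε * (2:ℝ)^k ≤ ε * (t / (2*ε)) := by
                apply mul_le_mul_of_nonneg_left hk1 hε.le
            _ = t/2 := by field_simp
        have hB : ENNReal.ofReal (t/2) <
            ENNReal.ofReal ((33/8:ℝ) ^ n) * Mmax g2 x := by
          by_contra hcon
          push_neg at hcon
          have : ENNReal.ofReal t < ENNReal.ofReal (t/2) + ENNReal.ofReal (t/2) :=
            lt_of_lt_of_le hxk (add_le_add hA hcon)
          rw [← ENNReal.ofReal_add (by positivity) (by positivity)] at this
          have h4 : t < t/2 + t/2 := by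
            have := (ENNReal.ofReal_lt_ofReal_iff (by positivity)).1 this
            exact this
          linarith
        have hkey : ENNReal.ofReal ((33/8:ℝ)^n) * ENNReal.ofReal t'
            < ENNReal.ofReal ((33/8:ℝ)^n) * Mmax g2 x := by
          rw [← ENNReal.ofReal_mul (by positivity)]
          have heq : ((33:ℝ)/8)^n * t' = t/2 := by
            rw [ht'def]; field_simp
          rw [heq]
          exact hB
        exact (ENNReal.mul_lt_mul_iff_right hcne ENNReal.ofReal_ne_top).1 hkey
      have hIk : (∫⁻ z, ENNReal.ofReal |g2 z|) ≠ ∞ := by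
        have hbd : ∀ z, ENNReal.ofReal |g2 z|
            ≤ ENNReal.ofReal (((2:ℝ)^k)⁻¹) * G z ^ (2:ℝ) := by
          intro z
          rw [hG2 z, ← ENNReal.ofReal_mul (by positivity)]
          apply ENNReal.ofReal_le_ofReal
          by_cases h : |f z| ≤ (2:ℝ)^k
          · simp only [hg2, h, if_true, abs_zero]
            positivity
          · push_neg at h
            simp only [hg2, h.not_ge, if_false]
            have hk0 : (0:ℝ) < (2:ℝ)^k := by positivity
            rw [inv_mul_eq_div, le_div_iff₀ hk0]
            nlinarith [abs_nonneg (f z)]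
        have hle := lintegral_mono (μ := (volume : Measure (EuclideanSpace ℝ (Fin n)))) hbd
        rw [lintegral_const_mul' _ _ ENNReal.ofReal_ne_top] at hle
        exact ne_top_of_le_ne_top (ENNReal.mul_ne_top ENNReal.ofReal_ne_top hI2) hle
      have hWk : (∫⁻ z, ENNReal.ofReal |g2 z|) ≤ W t := by
        apply lintegral_mono
        intro z
        by_cases h : |f z| ≤ (2:ℝ)^k
        · simp only [hg2, h, if_true, abs_zero, ENNReal.ofReal_zero]
          exact zero_le
        · push_neg at h
          have h5 : t < 4 * ε * |f z| := by
            have h6 : t / (2*ε) < 2 * (2:ℝ)^k := by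
              calc t / (2*ε) < (2:ℝ)^(k+1) := hk2
                _ = 2 * (2:ℝ)^k := by
                    rw [zpow_add₀ (by norm_num : (2:ℝ) ≠ 0) k 1]; ring
            have h7 : t < 4 * ε * (2:ℝ)^k := by
              rw [div_lt_iff₀ (by positivity)] at h6
              nlinarith
            nlinarith [h.le, hε.le, (show (0:ℝ) < (2:ℝ)^k by positivity)]
          simp only [hW, h5, if_true, hg2, h.not_ge, if_false, hG]
          exact le_rfl
      have hwt := weaktype hn (hm2 k) ht' hIk
      calc volume {x | ENNReal.ofReal t < Ψ x}
          ≤ volume {x | ENNReal.ofReal t' < Mmax g2 x} := measure_mono hsub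
        _ ≤ ENNReal.ofReal (4 ^ n) * μB * (ENNReal.ofReal t')⁻¹ *
              ∫⁻ z, ENNReal.ofReal |g2 z| := hwt
        _ ≤ ENNReal.ofReal (4 ^ n) * μB * (ENNReal.ofReal t')⁻¹ * W t :=
            mul_le_mul_right hWk _
        _ = D * (ENNReal.ofReal t)⁻¹ * W t := by
            have hinv : (ENNReal.ofReal t')⁻¹
                = ENNReal.ofReal (2 * (33/8:ℝ)^n) * (ENNReal.ofReal t)⁻¹ := by
              rw [ht'def, div_eq_mul_inv, ENNReal.ofReal_mul ht.le,
                ENNReal.mul_inv (Or.inl (by simp only [ne_eq, ENNReal.ofReal_eq_zero, not_le]; exact ht))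
                  (Or.inl ENNReal.ofReal_ne_top),
                ENNReal.ofReal_inv_of_pos (by positivity), inv_inv]
              ring
            rw [hinv, hD]
            ring
    -- layer cake and conclusion
    have hlayer : (∫⁻ x, (Meps ε f x) ^ (2:ℝ)) ≤ K * ENNReal.ofReal ε * I2 := by
      have hjm : Measurable fun p : (EuclideanSpace ℝ (Fin n)) × ℝ =>
          (if ENNReal.ofReal p.2 < Ψ p.1 then 2 * ENNReal.ofReal p.2 else 0) := by
        apply Measurable.ite
        · exact measurableSet_lt (ENNReal.measurable_ofReal.comp measurable_snd)
            (hΨm.comp measurable_fst)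
        · exact (ENNReal.measurable_ofReal.comp measurable_snd).const_mul 2
        · exact measurable_const
      calc (∫⁻ x, (Meps ε f x) ^ (2:ℝ))
          ≤ ∫⁻ x, Ψ x ^ (2:ℝ) :=
            lintegral_mono fun x => ENNReal.rpow_le_rpow (hMΨ x) (by norm_num)
        _ ≤ ∫⁻ x, ∫⁻ t in Ioi (0:ℝ),
              (if ENNReal.ofReal t < Ψ x then 2 * ENNReal.ofReal t else 0) :=
            lintegral_mono fun x => sq_layer (Ψ x)
        _ = ∫⁻ t in Ioi (0:ℝ), ∫⁻ x,
              (if ENNReal.ofReal t < Ψ x then 2 * ENNReal.ofReal t else 0) := by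
            apply lintegral_lintegral_swap
            exact hjm.aemeasurable
        _ = ∫⁻ t in Ioi (0:ℝ), 2 * ENNReal.ofReal t * volume {x | ENNReal.ofReal t < Ψ x} := by
            apply lintegral_congr
            intro t
            rw [← lintegral_indicator_const (measurableSet_lt measurable_const hΨm) (2 * ENNReal.ofReal t)]
            apply lintegral_congr
            intro x
            classical
            rw [indicator_apply]
            simp only [mem_setOf_eq]
        _ ≤ ∫⁻ _t in Ioi (0:ℝ), (2 * D) * W _t := by
            apply lintegral_mono_ae
            filter_upwards [self_mem_ae_restrict measurableSet_Ioi] with t ht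
            calc 2 * ENNReal.ofReal t * volume {x | ENNReal.ofReal t < Ψ x}
                ≤ 2 * ENNReal.ofReal t * (D * (ENNReal.ofReal t)⁻¹ * W t) :=
                  mul_le_mul_right (hdist t ht) _
              _ = 2 * D * (ENNReal.ofReal t * (ENNReal.ofReal t)⁻¹) * W t := by ring
              _ = 2 * D * W t := by
                  rw [ENNReal.mul_inv_cancel
                    (by simp only [ne_eq, ENNReal.ofReal_eq_zero, not_le]; exact ht)
                    ENNReal.ofReal_ne_top, mul_one]
        _ = (2 * D) * ∫⁻ t in Ioi (0:ℝ), W t :=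
            lintegral_const_mul' _ _ (ENNReal.mul_ne_top (by norm_num) hDfin)
        _ ≤ K * ENNReal.ofReal ε * I2 := by
            have hWswap : (∫⁻ t in Ioi (0:ℝ), W t) = ENNReal.ofReal (4 * ε) * I2 := by
              have hjm2 : Measurable fun p : ℝ × (EuclideanSpace ℝ (Fin n)) =>
                  (if p.1 < 4 * ε * |f p.2| then G p.2 else 0) := by
                apply Measurable.ite
                · exact measurableSet_lt measurable_fst
                    (((hf.comp measurable_snd).abs).const_mul (4 * ε))
                · exact (hf.comp measurable_snd).abs.ennreal_ofReal
                · exact measurable_const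
              calc (∫⁻ t in Ioi (0:ℝ), W t)
                  = ∫⁻ z, ∫⁻ t in Ioi (0:ℝ), (if t < 4 * ε * |f z| then G z else 0) := by
                    apply lintegral_lintegral_swap
                    exact hjm2.aemeasurable
                _ = ∫⁻ z, G z * ENNReal.ofReal (4 * ε * |f z|) := by
                    apply lintegral_congr
                    intro z
                    have : (fun t : ℝ => (if t < 4 * ε * |f z| then G z else 0))
                        = fun t => (Iio (4 * ε * |f z|)).indicator (fun _ => G z) t := by
                      ext t
                      classical
                      rw [indicator_apply]
                      simp only [mem_Iio]
                    rw [this, lintegral_indicator measurableSet_Iio, setLIntegral_const,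
                      Measure.restrict_apply measurableSet_Iio]
                    congr 1
                    have : Iio (4 * ε * |f z|) ∩ Ioi 0 = Ioo 0 (4 * ε * |f z|) := by
                      ext t
                      simp only [mem_inter_iff, mem_Iio, mem_Ioi, mem_Ioo]
                      tauto
                    rw [this, Real.volume_Ioo, sub_zero]
                _ = ∫⁻ z, ENNReal.ofReal (4 * ε) * G z ^ (2:ℝ) := by
                    apply lintegral_congr
                    intro z
                    rw [hG2 z, hG, ← ENNReal.ofReal_mul (abs_nonneg _),
                      ← ENNReal.ofReal_mul (by positivity)]
                    congr 1
                    ring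
                _ = ENNReal.ofReal (4 * ε) * I2 :=
                    lintegral_const_mul' _ _ ENNReal.ofReal_ne_top
            rw [hWswap, hK, ENNReal.ofReal_mul (by norm_num), ← mul_assoc]
            apply le_of_eq
            congr 1
            rw [show ENNReal.ofReal (4:ℝ) = (4:ℝ≥0∞) by simp]
            ring
    -- final rpow manipulation
    have hKI : K * ENNReal.ofReal ε ≤ ENNReal.ofReal (C * ε ^ (1/2:ℝ)) ^ (2:ℝ) := by
      have hKC : K.toReal ≤ C ^ 2 := by
        have h1 : (K.toReal ^ (1/2:ℝ)) ^ 2 = K.toReal := by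
          rw [← Real.rpow_natCast (K.toReal ^ (1/2:ℝ)) 2, ← Real.rpow_mul ENNReal.toReal_nonneg]
          norm_num
        nlinarith [le_max_right (1:ℝ) (K.toReal ^ (1/2:ℝ)),
          Real.rpow_nonneg (ENNReal.toReal_nonneg (a := K)) (1/2:ℝ),
          le_max_left (1:ℝ) (K.toReal ^ (1/2:ℝ))]
      have hs2 : (C * ε ^ (1/2:ℝ)) ^ (2:ℝ) = C^2 * ε := by
        have h4 : (C * ε ^ (1/2:ℝ)) ^ (2:ℝ) = ((C * ε ^ (1/2:ℝ)) ^ (2:ℕ) : ℝ) := by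
          rw [← Real.rpow_natCast (C * ε ^ (1/2:ℝ)) 2]
          norm_num
        have h3 : (ε ^ (1/2:ℝ))^(2:ℕ) = ε := by
          rw [← Real.rpow_natCast (ε ^ (1/2:ℝ)) 2, ← Real.rpow_mul hε.le]
          norm_num
        rw [h4, mul_pow, h3]
      calc K * ENNReal.ofReal ε = ENNReal.ofReal (K.toReal * ε) := by
            rw [ENNReal.ofReal_mul ENNReal.toReal_nonneg, ENNReal.ofReal_toReal hKfin]
        _ ≤ ENNReal.ofReal (C^2 * ε) :=
            ENNReal.ofReal_le_ofReal (mul_le_mul_of_nonneg_right hKC hε.le)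
        _ = ENNReal.ofReal (C * ε ^ (1/2:ℝ)) ^ (2:ℝ) := by
            rw [ENNReal.ofReal_rpow_of_nonneg (by positivity) (by norm_num), hs2]
    calc (∫⁻ x, (Meps ε f x) ^ (2:ℝ)) ^ (1/2:ℝ)
        ≤ (K * ENNReal.ofReal ε * I2) ^ (1/2:ℝ) := ENNReal.rpow_le_rpow hlayer (by norm_num)
      _ = (K * ENNReal.ofReal ε) ^ (1/2:ℝ) * I2 ^ (1/2:ℝ) :=
          ENNReal.mul_rpow_of_nonneg _ _ (by norm_num)
      _ ≤ ENNReal.ofReal (C * ε ^ (1/2:ℝ)) * (∫⁻ x, ENNReal.ofReal |f x| ^ (2:ℝ)) ^ (1/2:ℝ) := by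
          apply mul_le_mul'
          · calc (K * ENNReal.ofReal ε) ^ (1/2:ℝ)
                ≤ (ENNReal.ofReal (C * ε ^ (1/2:ℝ)) ^ (2:ℝ)) ^ (1/2:ℝ) :=
                  ENNReal.rpow_le_rpow hKI (by norm_num)
              _ = ENNReal.ofReal (C * ε ^ (1/2:ℝ)) := by
                  rw [← ENNReal.rpow_mul]
                  norm_num
          · exact le_of_eq rfl
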